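/- For every t ∈ [0,1], the 3×3 diagonal density matrices ρ = diag(1−t, t, 0) and σ = diag(1−t, 0, t) satisfy ‖ρ − σ‖₁/2 = t and S(ρ + I ‖ σ + I) = t·log(1 + t). -/

import Mathlib

open Matrix MeasureTheory
open scoped ComplexOrder

/-- Matrix logarithm on the support: apply `Real.log` (which is `0` at `0`) to the
eigenvalues of a Hermitian matrix via functional calculus; junk value `0` otherwise. -/
noncomputable def mlog {n : Type*} [Fintype n] [DecidableEq n] (A : Matrix n n ℂ) :
    Matrix n n ℂ :=
  if hA : A.IsHermitian then hA.cfc Real.log else 0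

/-- Quantum relative entropy `S(A‖B) = Tr A (log A - log B)`. -/
noncomputable def qRelEnt {n : Type*} [Fintype n] [DecidableEq n] (A B : Matrix n n ℂ) : ℝ :=
  ((A * (mlog A - mlog B)).trace).re

/-- The square root of a positive semidefinite matrix, as `Matrix.PosSemidef.sqrt` was
defined in the older Mathlib. -/
noncomputable def posSemidefSqrt {n : Type*} [Fintype n] [DecidableEq n] {A : Matrix n n ℂ}
    (hA : A.PosSemidef) : Matrix n n ℂ :=
  (hA.1.eigenvectorUnitary : Matrix n n ℂ) * diagonal ((↑) ∘ (√·) ∘ hA.1.eigenvalues) *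
    (star hA.1.eigenvectorUnitary : Matrix n n ℂ)

theorem posSemidefSqrt_isHermitian {n : Type*} [Fintype n] [DecidableEq n] {A : Matrix n n ℂ}
    (hA : A.PosSemidef) : (posSemidefSqrt hA).IsHermitian := by
  unfold posSemidefSqrt
  rw [Matrix.star_eq_conjTranspose]
  refine Matrix.isHermitian_mul_mul_conjTranspose _ ?_
  refine Matrix.isHermitian_diagonal_of_self_adjoint _ ?_
  ext i
  simp

/-- Trace norm `‖X‖₁ = Tr √(Xᴴ X)`. -/
noncomputable def traceNorm {n : Type*} [Fintype n] [DecidableEq n] (X : Matrix n n ℂ) : ℝ :=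
  ((posSemidefSqrt (Matrix.posSemidef_conjTranspose_mul_self X)).trace).re

/-- Smallest eigenvalue of a Hermitian matrix (junk value `0` otherwise). -/
noncomputable def lamMin {n : Type*} [Fintype n] [DecidableEq n] (A : Matrix n n ℂ) : ℝ :=
  if hA : A.IsHermitian then ⨅ i, hA.eigenvalues i else 0

/-- Largest eigenvalue of a Hermitian matrix (junk value `0` otherwise). -/
noncomputable def lamMax {n : Type*} [Fintype n] [DecidableEq n] (A : Matrix n n ℂ) : ℝ :=
  if hA : A.IsHermitian then ⨆ i, hA.eigenvalues i else 0

/-- Operator norm: largest eigenvalue of `√(Xᴴ X)` (largest singular value). -/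
noncomputable def opNorm {n : Type*} [Fintype n] [DecidableEq n] (X : Matrix n n ℂ) : ℝ :=
  ⨆ i, (posSemidefSqrt_isHermitian (Matrix.posSemidef_conjTranspose_mul_self X)).eigenvalues i

set_option maxHeartbeats 800000

section DiagCfc
variable {n : Type*} [Fintype n] [DecidableEq n]

lemma isHermitian_diagCoe (d : n → ℝ) :
    (Matrix.diagonal (fun i => (d i : ℂ))).IsHermitian := by
  rw [Matrix.IsHermitian, Matrix.diagonal_conjTranspose]
  refine congrArg _ (funext fun i => ?_)
  simp [Pi.star_def]

lemma mem_spectrum_diagCoe (d : n → ℝ) (i : n) :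
    d i ∈ spectrum ℝ (Matrix.diagonal (fun i => (d i : ℂ))) := by
  rw [← spectrum.algebraMap_mem_iff ℂ, spectrum_diagonal]
  exact ⟨i, rfl⟩

/-- The star algebra hom realizing the cfc of a real diagonal matrix. -/
noncomputable def diagCfcHom (d : n → ℝ) :
    C(spectrum ℝ (Matrix.diagonal (fun i => (d i : ℂ))), ℝ) →⋆ₐ[ℝ] Matrix n n ℂ where
  toFun g := Matrix.diagonal (fun i => ((g ⟨d i, mem_spectrum_diagCoe d i⟩ : ℝ) : ℂ))
  map_one' := by
    rw [← Matrix.diagonal_one, Matrix.diagonal_eq_diagonal_iff]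
    intro i; simp
  map_mul' f g := by
    rw [Matrix.diagonal_mul_diagonal, Matrix.diagonal_eq_diagonal_iff]
    intro i; push_cast; simp
  map_zero' := by
    rw [← Matrix.diagonal_zero, Matrix.diagonal_eq_diagonal_iff]
    intro i; simp
  map_add' f g := by
    rw [Matrix.diagonal_add, Matrix.diagonal_eq_diagonal_iff]
    intro i; push_cast; simp
  commutes' r := by
    rw [Matrix.algebraMap_eq_diagonal, Matrix.diagonal_eq_diagonal_iff]
    intro i; simp [Pi.algebraMap_def]
  map_star' f := by
    ext i j
    rcases eq_or_ne i j with rfl | h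
    · simp [Matrix.star_apply, Matrix.diagonal_apply_eq]
    · simp [Matrix.star_apply, Matrix.diagonal_apply_ne _ h, Matrix.diagonal_apply_ne _ h.symm]

lemma continuous_diagCfcHom (d : n → ℝ) : Continuous (diagCfcHom (n := n) d) := by
  apply continuous_matrix
  intro i j
  rcases eq_or_ne i j with rfl | h
  · simp only [diagCfcHom, StarAlgHom.coe_mk', AlgHom.coe_mk, RingHom.coe_mk, MonoidHom.coe_mk,
      OneHom.coe_mk, Matrix.diagonal_apply_eq]
    exact Complex.continuous_ofReal.comp (continuous_eval_const _)
  · simp only [diagCfcHom, StarAlgHom.coe_mk', AlgHom.coe_mk, RingHom.coe_mk, MonoidHom.coe_mk,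
      OneHom.coe_mk, Matrix.diagonal_apply_ne _ h]
    exact continuous_const

lemma cfc_diagCoe (d : n → ℝ) (f : ℝ → ℝ) :
    (isHermitian_diagCoe d).cfc f = Matrix.diagonal (fun i => ((f (d i) : ℝ) : ℂ)) := by
  rw [← Matrix.IsHermitian.cfc_eq]
  have ha : IsSelfAdjoint (Matrix.diagonal (fun i => (d i : ℂ))) := isHermitian_diagCoe d
  have hcont : ContinuousOn f (spectrum ℝ (Matrix.diagonal (fun i => (d i : ℂ)))) := by
    rw [continuousOn_iff_continuous_restrict]; fun_prop
  rw [cfc_apply f _ ha hcont]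
  have hid : diagCfcHom d ((ContinuousMap.id ℝ).restrict (spectrum ℝ _)) =
      Matrix.diagonal (fun i => (d i : ℂ)) := rfl
  rw [cfcHom_eq_of_continuous_of_map_id ha (diagCfcHom d) (continuous_diagCfcHom d) hid]
  rfl

lemma mlog_diagCoe (d : n → ℝ) :
    mlog (Matrix.diagonal (fun i => (d i : ℂ)))
      = Matrix.diagonal (fun i => ((Real.log (d i) : ℝ) : ℂ)) := by
  rw [mlog, dif_pos (isHermitian_diagCoe d), cfc_diagCoe]

end DiagCfc

/-- The bound `S(ρ + I ‖ σ + I) ≤ T log(1 + T)` is achieved by a pair of `3×3`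
diagonal density matrices, for every `t ∈ [0,1]`. -/
theorem regRelEntropy_bound_sharp (t : ℝ) (ht : t ∈ Set.Icc (0 : ℝ) 1) :
    let ρ : Matrix (Fin 3) (Fin 3) ℂ := Matrix.diagonal ![((1 - t : ℝ) : ℂ), (t : ℂ), 0]
    let σ : Matrix (Fin 3) (Fin 3) ℂ := Matrix.diagonal ![((1 - t : ℝ) : ℂ), 0, (t : ℂ)]
    traceNorm (ρ - σ) / 2 = t ∧
    qRelEnt (ρ + 1) (σ + 1) = t * Real.log (1 + t) := by
  obtain ⟨ht0, ht1⟩ := ht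
  intro ρ σ
  constructor
  · -- trace norm part
    have hX : ρ - σ = Matrix.diagonal (fun i => ((![0, t, -t] : Fin 3 → ℝ) i : ℂ)) := by
      show Matrix.diagonal _ - Matrix.diagonal _ = _
      rw [Matrix.diagonal_sub, Matrix.diagonal_eq_diagonal_iff]
      intro i
      fin_cases i <;> simp
    set X := ρ - σ with hXdef
    have hXX : (Xᴴ * X) = Matrix.diagonal (fun i => ((![0, t^2, t^2] : Fin 3 → ℝ) i : ℂ)) := by
      rw [hX, Matrix.diagonal_conjTranspose, Matrix.diagonal_mul_diagonal,
        Matrix.diagonal_eq_diagonal_iff]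
      intro i
      fin_cases i <;> simp [Pi.star_def] <;> push_cast <;> ring
    have hS : Matrix.PosSemidef (Matrix.diagonal (fun i => ((![0, t, t] : Fin 3 → ℝ) i : ℂ))) := by
      refine Matrix.PosSemidef.diagonal fun i => ?_
      fin_cases i <;> simp [Complex.zero_le_real, ht0]
    have hsq : (Matrix.diagonal (fun i => ((![0, t, t] : Fin 3 → ℝ) i : ℂ))) ^ 2 = Xᴴ * X := by
      rw [pow_two, Matrix.diagonal_mul_diagonal, hXX, Matrix.diagonal_eq_diagonal_iff]
      intro i
      fin_cases i <;> simp <;> push_cast <;> ring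
    have : Matrix.diagonal (fun i => ((![0, t, t] : Fin 3 → ℝ) i : ℂ)) =
        posSemidefSqrt (Matrix.posSemidef_conjTranspose_mul_self X) := by
      have h1 : posSemidefSqrt (Matrix.posSemidef_conjTranspose_mul_self X) =
          (Matrix.posSemidef_conjTranspose_mul_self X).1.cfc Real.sqrt := by
        rw [Matrix.IsHermitian.cfc, posSemidefSqrt, Unitary.conjStarAlgAut_apply]; rfl
      rw [h1, ← Matrix.IsHermitian.cfc_eq, hXX, Matrix.IsHermitian.cfc_eq (isHermitian_diagCoe _),
        cfc_diagCoe, Matrix.diagonal_eq_diagonal_iff]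
      intro i
      fin_cases i <;> simp [Real.sqrt_sq ht0]
    rw [traceNorm, ← this, Matrix.trace_diagonal, Fin.sum_univ_three]
    push_cast
    simp
  · -- relative entropy part
    have hρ : ρ + 1 = Matrix.diagonal (fun i => ((![2 - t, 1 + t, 1] : Fin 3 → ℝ) i : ℂ)) := by
      show Matrix.diagonal _ + 1 = _
      rw [← Matrix.diagonal_one, Matrix.diagonal_add, Matrix.diagonal_eq_diagonal_iff]
      intro i
      fin_cases i <;> push_cast <;> ring
    have hσ : σ + 1 = Matrix.diagonal (fun i => ((![2 - t, 1, 1 + t] : Fin 3 → ℝ) i : ℂ)) := by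
      show Matrix.diagonal _ + 1 = _
      rw [← Matrix.diagonal_one, Matrix.diagonal_add, Matrix.diagonal_eq_diagonal_iff]
      intro i
      fin_cases i <;> push_cast <;> ring
    rw [qRelEnt, hρ, hσ, mlog_diagCoe, mlog_diagCoe, Matrix.diagonal_sub,
      Matrix.diagonal_mul_diagonal, Matrix.trace_diagonal, Fin.sum_univ_three]
    push_cast
    simp [Real.log_one]
    ring
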